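/- Let F be a number-conserving one-dimensional CA with states S ⊆ {0,...,M} (where 0, M ∈ S) and neighborhood {0,...,r} (local rule f with n = r+1 arguments). Then for every configuration c ∈ S^ℤ and every i ∈ ℤ: ∑_{j=i-r}^{i} f(c_j,...,c_{j+r}) ≤ rM + c_i. -/

import Mathlib

open Finset

/-- Global map of a 1D CA: the local rule `f` is applied to the window of `c` around each cell. -/
def glob (f : (ℤ → ℤ) → ℤ) (c : ℤ → ℤ) : ℤ → ℤ := fun i => f (fun j => c (i + j))

/-- A configuration over state set `S`. -/
def Config (S : Finset ℤ) (c : ℤ → ℤ) : Prop := ∀ i, c i ∈ S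

/-- `p` is a (spatial) period of `c`. -/
def Per (p : ℕ) (c : ℤ → ℤ) : Prop := ∀ i : ℤ, c (i + (p : ℤ)) = c i

/-- The local rule only depends on the neighborhood `{-l,...,r}`. -/
def LocalRule (l r : ℕ) (f : (ℤ → ℤ) → ℤ) : Prop :=
  ∀ c d : ℤ → ℤ, (∀ j : ℤ, -(l : ℤ) ≤ j → j ≤ (r : ℤ) → c j = d j) → f c = f d

/-- The rule maps `S`-configurations to states in `S`. -/
def Closed (S : Finset ℤ) (f : (ℤ → ℤ) → ℤ) : Prop :=
  ∀ c, Config S c → f c ∈ S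

/-- Number conservation: the sum over one period of any spatially periodic
configuration is preserved by the global map. -/
def NC (S : Finset ℤ) (f : (ℤ → ℤ) → ℤ) : Prop :=
  ∀ c : ℤ → ℤ, Config S c → ∀ p : ℕ, 0 < p → Per p c →
    ∑ k ∈ Finset.range p, glob f c (k : ℤ) = ∑ k ∈ Finset.range p, c (k : ℤ)

lemma per_shift {p : ℕ} {g : ℤ → ℤ} (hg : Per p g) (q : ℤ) (x : ℤ) :
    g (x + (p : ℤ) * q) = g x := by
  induction q using Int.induction_on with
  | zero => simp
  | succ n ih =>
      have h := hg (x + (p : ℤ) * n)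
      have e1 : x + (p : ℤ) * ((n : ℤ) + 1) = (x + (p : ℤ) * n) + p := by ring
      rw [e1, h, ih]
  | pred n ih =>
      have h := hg (x + (p : ℤ) * (-(n : ℤ) - 1))
      have e1 : x + (p : ℤ) * (-(n : ℤ) - 1) + p = x + (p : ℤ) * (-(n : ℤ)) := by ring
      rw [e1] at h
      rw [← h]; exact ih

lemma per_emod {p : ℕ} {g : ℤ → ℤ} (hg : Per p g) (j : ℤ) :
    g j = g (j % p) := by
  conv_lhs => rw [← Int.emod_add_mul_ediv j p]
  exact per_shift hg (j / p) (j % p)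

lemma sum_per (p : ℕ) (hp : 0 < p) (g : ℤ → ℤ) (hg : Per p g) (a : ℤ) :
    ∑ k ∈ Finset.range p, g (k : ℤ) = ∑ j ∈ Finset.Icc a (a + p - 1), g j := by
  have hp' : (0:ℤ) < p := by exact_mod_cast hp
  have hpne : (p:ℤ) ≠ 0 := hp'.ne'
  refine Finset.sum_nbij' (i := fun k => a + (((k : ℤ) - a) % p))
    (j := fun j => (j % (p:ℤ)).toNat) ?_ ?_ ?_ ?_ ?_
  · intro k hk
    have h1 := Int.emod_nonneg ((k:ℤ) - a) hpne
    have h2 := Int.emod_lt_of_pos ((k:ℤ) - a) hp'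
    simp only [Finset.mem_Icc]; omega
  · intro j hj
    have h1 := Int.emod_nonneg j hpne
    have h2 := Int.emod_lt_of_pos j hp'
    simp only [Finset.mem_range]; omega
  · intro k hk
    simp only [Finset.mem_range] at hk
    have : (a + ((k:ℤ) - a) % p) % p = (k:ℤ) % p := by
      rw [Int.add_emod, Int.emod_emod_of_dvd _ dvd_rfl, ← Int.add_emod]
      ring_nf
    have hk2 : (k:ℤ) % p = k := Int.emod_eq_of_lt (by positivity) (by exact_mod_cast hk)
    rw [this, hk2]; simp
  · intro j hj
    simp only [Finset.mem_Icc] at hj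
    have h1 := Int.emod_nonneg j hpne
    have h2 := Int.emod_lt_of_pos j hp'
    have ht : ((j % (p:ℤ)).toNat : ℤ) = j % p := Int.toNat_of_nonneg h1
    rw [ht]
    have : (j % (p:ℤ) - a) % p = (j - a) % p := by
      rw [Int.sub_emod, Int.emod_emod_of_dvd _ dvd_rfl, ← Int.sub_emod]
    rw [this, Int.emod_eq_of_lt (by omega) (by omega)]
    ring
  · intro k hk
    rw [per_emod hg (k:ℤ), per_emod hg (a + ((k:ℤ) - a) % p)]
    congr 1
    rw [Int.add_emod, Int.emod_emod_of_dvd _ dvd_rfl, ← Int.add_emod]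
    ring_nf

/-- For a number-conserving CA with one-sided neighborhood `{0,...,r}` and states
in `{0,...,M}`, the sum of the `r+1` new states that can see cell `i` is at most
`rM + c i`. -/
theorem window_sum_bound
    (S : Finset ℤ) (M : ℤ) (r : ℕ) (f : (ℤ → ℤ) → ℤ)
    (hS : S ⊆ Finset.Icc 0 M) (h0 : (0 : ℤ) ∈ S) (hM : M ∈ S)
    (hl : LocalRule 0 r f) (hC : Closed S f) (hNC : NC S f)
    (c : ℤ → ℤ) (hc : Config S c) (i : ℤ) :
    ∑ j ∈ Finset.Icc (i - (r : ℤ)) i, glob f c j ≤ (r : ℤ) * M + c i := by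
  set p : ℕ := 2 * r + 1 with hpdef
  have hp : 0 < p := by omega
  have hp' : (0:ℤ) < p := by exact_mod_cast hp
  have hpne : (p:ℤ) ≠ 0 := hp'.ne'
  set a : ℤ := i - r with ha
  set e : ℤ → ℤ := fun j => c (a + (j - a) % p) with he
  set e' : ℤ → ℤ := fun j => if (j - i) % p = 0 then M else e j with he'
  -- e agrees with c on the window [a, i+r]
  have hwin : ∀ j : ℤ, a ≤ j → j ≤ i + r → e j = c j := by
    intro j h1 h2
    have : (j - a) % p = j - a := Int.emod_eq_of_lt (by omega) (by omega)
    simp only [he, this]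
    congr 1; ring
  have hper_e : Per p e := by
    intro j
    have : (j + (p:ℤ) - a) % p = (j - a) % p := by
      have : j + (p:ℤ) - a = (j - a) + (p:ℤ) * 1 := by ring
      rw [this, Int.add_mul_emod_self_left]
    simp only [he, this]
  have hper_e' : Per p e' := by
    intro j
    have h1 : (j + (p:ℤ) - i) % p = (j - i) % p := by
      have : j + (p:ℤ) - i = (j - i) + (p:ℤ) * 1 := by ring
      rw [this, Int.add_mul_emod_self_left]
    simp only [he', h1, hper_e j]
  have hce : Config S e := fun j => hc _
  have hce' : Config S e' := by
    intro j
    simp only [he']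
    split
    · exact hM
    · exact hce j
  -- key: small residues
  have key : ∀ d : ℤ, -(r:ℤ) ≤ d → d ≤ r → d % p = 0 → d = 0 := by
    intro d h1 h2 h3
    rcases le_or_gt 0 d with h | h
    · rwa [Int.emod_eq_of_lt h (by omega)] at h3
    · have h4 : (d + (p:ℤ) * 1) % p = d % p := Int.add_mul_emod_self_left d (p:ℤ) 1
      rw [Int.emod_eq_of_lt (by omega) (by omega)] at h4
      omega
  have hper_glob : ∀ g : ℤ → ℤ, Per p g → Per p (glob f g) := by
    intro g hg j
    show f (fun t => g (j + (p:ℤ) + t)) = f (fun t => g (j + t))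
    congr 1
    funext t
    have h := hg (j + t)
    rw [← h]
    congr 1; ring
  have hA := hNC e hce p hp hper_e
  have hB := hNC e' hce' p hp hper_e'
  have hab : a + (p:ℤ) - 1 = i + r := by omega
  have hsum : ∑ j ∈ Finset.Icc a (i + (r:ℤ)), (glob f e' j - glob f e j)
      = ∑ j ∈ Finset.Icc a (i + (r:ℤ)), (e' j - e j) := by
    have hD : Per p (fun k => glob f e' k - glob f e k) := by
      intro j; simp only [hper_glob e' hper_e' j, hper_glob e hper_e j]
    have hE : Per p (fun k => e' k - e k) := by
      intro j; simp only [hper_e' j, hper_e j]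
    have h1 := sum_per p hp (fun k => glob f e' k - glob f e k) hD a
    have h2 := sum_per p hp (fun k => e' k - e k) hE a
    rw [hab] at h1 h2
    rw [← h1, ← h2, Finset.sum_sub_distrib, Finset.sum_sub_distrib, hA, hB]
  -- RHS equals M - c i
  have hRHS : ∑ j ∈ Finset.Icc a (i + (r:ℤ)), (e' j - e j) = M - c i := by
    have hcongr : ∀ j ∈ Finset.Icc a (i + (r:ℤ)), e' j - e j
        = if j = i then M - c i else 0 := by
      intro j hj
      simp only [Finset.mem_Icc] at hj
      by_cases hji : j = i
      · subst hji
        have h2 : e j = c j := hwin j (by omega) (by omega)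
        simp [he', h2]
      · have hne : (j - i) % (p:ℤ) ≠ 0 := by
          intro h
          exact hji (by have := key (j - i) (by omega) (by omega) h; omega)
        simp only [he', if_neg hne, if_neg hji]
        ring
    rw [Finset.sum_congr rfl hcongr, Finset.sum_ite_eq' _ i (fun _ => M - c i)]
    rw [if_pos (by simp only [Finset.mem_Icc]; omega)]
  -- terms with j > i vanish
  have hD0 : ∀ j : ℤ, i < j → j ≤ i + r → glob f e' j = glob f e j := by
    intro j h1 h2
    show f (fun t => e' (j + t)) = f (fun t => e (j + t))
    apply hl
    intro t h3 h4
    have h3' : 0 ≤ t := by simpa using h3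
    have h5 : (j + t - i) % p = j + t - i := Int.emod_eq_of_lt (by omega) (by omega)
    have h6 : (j + t - i) % (p:ℤ) ≠ 0 := by omega
    simp only [he', if_neg h6]
  have hrestrict : ∑ j ∈ Finset.Icc a (i + (r:ℤ)), (glob f e' j - glob f e j)
      = ∑ j ∈ Finset.Icc a i, (glob f e' j - glob f e j) := by
    symm
    apply Finset.sum_subset
    · intro x hx
      simp only [Finset.mem_Icc] at hx ⊢
      omega
    · intro x hx1 hx2
      simp only [Finset.mem_Icc] at hx1 hx2
      rw [hD0 x (by omega) (by omega)]
      ring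
  -- glob f e = glob f c on [a, i]
  have hgc : ∀ j ∈ Finset.Icc a i, glob f e j = glob f c j := by
    intro j hj
    simp only [Finset.mem_Icc] at hj
    show f (fun t => e (j + t)) = f (fun t => c (j + t))
    apply hl
    intro t h3 h4
    have h3' : 0 ≤ t := by simpa using h3
    exact hwin (j + t) (by omega) (by omega)
  have hbound : ∑ j ∈ Finset.Icc a i, glob f e' j ≤ ((r:ℤ) + 1) * M := by
    have hcard : (Finset.Icc a i).card = r + 1 := by
      rw [Int.card_Icc]
      omega
    calc ∑ j ∈ Finset.Icc a i, glob f e' j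
        ≤ ∑ _j ∈ Finset.Icc a i, M := by
          apply Finset.sum_le_sum
          intro j hj
          have : glob f e' j ∈ S := hC _ (fun t => hce' _)
          exact (Finset.mem_Icc.mp (hS this)).2
      _ = ((r:ℤ) + 1) * M := by
          rw [Finset.sum_const, hcard]
          push_cast
          ring
  have hmain : ∑ j ∈ Finset.Icc a i, glob f e' j - ∑ j ∈ Finset.Icc a i, glob f e j
      = M - c i := by
    rw [← Finset.sum_sub_distrib, ← hrestrict, hsum, hRHS]
  calc ∑ j ∈ Finset.Icc (i - (r:ℤ)) i, glob f c j
      = ∑ j ∈ Finset.Icc a i, glob f e j := (Finset.sum_congr rfl hgc).symm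
    _ ≤ (r:ℤ) * M + c i := by linarith
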